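/- (Corollary 1, IOC with incomplete observations.) Suppose the full-horizon KKT conditions hold for some ω* ∈ ℝ^r with ω* ≠ 0 and some costates λ* ∈ (ℝ^n)^T. Let 1 ≤ t ≤ t+l−1 ≤ T and let (ω̂, λ̂) ∈ ℝ^r × ℝ^n be an element of the kernel of H(t,l) with (ω̂, λ̂) ≠ 0. If rank H(t,l) = r+n−1, then there exists a constant c ≠ 0 such that ω̂ = c·ω*. -/

import Mathlib

open Matrix

noncomputable section

variable {n m r : ℕ}

/-- Block upper bidiagonal matrix `F_x(t,l)` (0-based block indices): diagonal blocks are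
`I_n`, and block `(i, i+1)` is `-(A (t+i))ᵀ`. -/
def Fx (A : ℕ → Matrix (Fin n) (Fin n) ℝ) (t l : ℕ) :
    Matrix (Fin l × Fin n) (Fin l × Fin n) ℝ :=
  fun ip jq =>
    if ip.1 = jq.1 then (if ip.2 = jq.2 then (1 : ℝ) else 0)
    else if (jq.1 : ℕ) = (ip.1 : ℕ) + 1 then -((A (t + (ip.1 : ℕ)))ᵀ ip.2 jq.2)
    else 0

/-- Block diagonal matrix `F_u(t,l)` with diagonal blocks `(B (t+i))ᵀ`. -/
def Fu (B : ℕ → Matrix (Fin n) (Fin m) ℝ) (t l : ℕ) :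
    Matrix (Fin l × Fin m) (Fin l × Fin n) ℝ :=
  fun ip jq => if ip.1 = jq.1 then (B (t + (ip.1 : ℕ)))ᵀ ip.2 jq.2 else 0

/-- Vertical stack `Φ_x(t,l)` of the blocks `(G (t+i))ᵀ`. -/
def Phix (G : ℕ → Matrix (Fin r) (Fin n) ℝ) (t l : ℕ) :
    Matrix (Fin l × Fin n) (Fin r) ℝ :=
  fun ip q => (G (t + (ip.1 : ℕ)))ᵀ ip.2 q

/-- Vertical stack `Φ_u(t,l)` of the blocks `(D (t+i))ᵀ`. -/
def Phiu (D : ℕ → Matrix (Fin r) (Fin m) ℝ) (t l : ℕ) :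
    Matrix (Fin l × Fin m) (Fin r) ℝ :=
  fun ip q => (D (t + (ip.1 : ℕ)))ᵀ ip.2 q

/-- `V(t,l)`: all `n×n` blocks zero except the last one, which is `(A (t+l-1))ᵀ`. -/
def Vm (A : ℕ → Matrix (Fin n) (Fin n) ℝ) (t l : ℕ) :
    Matrix (Fin l × Fin n) (Fin n) ℝ :=
  fun ip q => if (ip.1 : ℕ) = l - 1 then (A (t + l - 1))ᵀ ip.2 q else 0

/-- `H₁(t,l) = F_u(t,l) · F_x(t,l)⁻¹ · Φ_x(t,l) + Φ_u(t,l)`. -/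
def H1m (A : ℕ → Matrix (Fin n) (Fin n) ℝ) (B : ℕ → Matrix (Fin n) (Fin m) ℝ)
    (G : ℕ → Matrix (Fin r) (Fin n) ℝ) (D : ℕ → Matrix (Fin r) (Fin m) ℝ) (t l : ℕ) :
    Matrix (Fin l × Fin m) (Fin r) ℝ :=
  Fu B t l * (Fx A t l)⁻¹ * Phix G t l + Phiu D t l

/-- `H₂(t,l) = F_u(t,l) · F_x(t,l)⁻¹ · V(t,l)`. -/
def H2m (A : ℕ → Matrix (Fin n) (Fin n) ℝ) (B : ℕ → Matrix (Fin n) (Fin m) ℝ) (t l : ℕ) :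
    Matrix (Fin l × Fin m) (Fin n) ℝ :=
  Fu B t l * (Fx A t l)⁻¹ * Vm A t l

/-- The recovery matrix `H(t,l) = [H₁(t,l)  H₂(t,l)]`. -/
def Hm (A : ℕ → Matrix (Fin n) (Fin n) ℝ) (B : ℕ → Matrix (Fin n) (Fin m) ℝ)
    (G : ℕ → Matrix (Fin r) (Fin n) ℝ) (D : ℕ → Matrix (Fin r) (Fin m) ℝ) (t l : ℕ) :
    Matrix (Fin l × Fin m) (Fin r ⊕ Fin n) ℝ :=
  fromCols (H1m A B G D t l) (H2m A B t l)

/-- Stack the vectors `lam t, lam (t+1), …, lam (t+l-1)` into a vector in `ℝ^{nl}`. -/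
def stackVec (lam : ℕ → Fin n → ℝ) (t l : ℕ) : Fin l × Fin n → ℝ :=
  fun ip => lam (t + (ip.1 : ℕ)) ip.2

/-- Full-horizon KKT conditions for the weight vector `ω` with costates `lam 1, …, lam T`. -/
def KKT (A : ℕ → Matrix (Fin n) (Fin n) ℝ) (B : ℕ → Matrix (Fin n) (Fin m) ℝ)
    (G : ℕ → Matrix (Fin r) (Fin n) ℝ) (D : ℕ → Matrix (Fin r) (Fin m) ℝ) (T : ℕ)
    (ω : Fin r → ℝ) (lam : ℕ → Fin n → ℝ) : Prop :=
  -(Fx A 1 T *ᵥ stackVec lam 1 T) + Phix G 1 T *ᵥ ω = 0 ∧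
    Fu B 1 T *ᵥ stackVec lam 1 T + Phiu D 1 T *ᵥ ω = 0

/-- The natural identification of `ℝ^{(l+1)·ι}`-indices with `ℝ^{l·ι} × ℝ^{ι}`-indices. -/
def splitIdx (l : ℕ) (ι : Type*) : Fin (l + 1) × ι → (Fin l × ι) ⊕ ι :=
  fun ip => if h : (ip.1 : ℕ) < l then Sum.inl (⟨ip.1, h⟩, ip.2) else Sum.inr ip.2

def Nx (A : ℕ → Matrix (Fin n) (Fin n) ℝ) (t l : ℕ) :
    Matrix (Fin l × Fin n) (Fin l × Fin n) ℝ :=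
  fun ip jq => if (jq.1 : ℕ) = (ip.1 : ℕ) + 1 then -(A (t + (ip.1 : ℕ)) jq.2 ip.2) else 0

lemma Fx_eq (A : ℕ → Matrix (Fin n) (Fin n) ℝ) (t l : ℕ) :
    Fx A t l = 1 + Nx A t l := by
  ext ⟨i, p⟩ ⟨j, q⟩
  simp only [Fx, Nx, Matrix.one_apply, Matrix.transpose_apply, Prod.mk.injEq, Matrix.add_apply,
    Prod.ext_iff]
  by_cases hij : i = j
  · have : ¬ ((j : ℕ) = (i : ℕ) + 1) := by subst hij; omega
    simp [hij, this]
  · have hij' : (i:ℕ) ≠ (j:ℕ) := fun h => hij (Fin.ext h)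
    by_cases h2 : (j : ℕ) = (i : ℕ) + 1 <;> simp [hij, hij', h2]

lemma Nx_pow_eq_zero (A : ℕ → Matrix (Fin n) (Fin n) ℝ) (t l : ℕ) (k : ℕ) :
    ∀ ip jq : Fin l × Fin n, (jq.1 : ℕ) ≠ (ip.1 : ℕ) + k → (Nx A t l ^ k) ip jq = 0 := by
  induction k with
  | zero =>
    intro ip jq h
    rw [pow_zero]
    exact Matrix.one_apply_ne (by intro he; exact h (by rw [he]; omega))
  | succ k ih =>
    intro ip jq h
    rw [pow_succ, Matrix.mul_apply]
    apply Finset.sum_eq_zero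
    intro kq _
    by_cases h1 : (kq.1 : ℕ) = (ip.1 : ℕ) + k
    · have h2 : ¬ ((jq.1 : ℕ) = (kq.1 : ℕ) + 1) := by omega
      simp [Nx, h2]
    · rw [ih ip kq h1, zero_mul]

lemma Fx_isUnit (A : ℕ → Matrix (Fin n) (Fin n) ℝ) (t l : ℕ) : IsUnit (Fx A t l) := by
  rw [Fx_eq, ← sub_neg_eq_add]
  exact IsNilpotent.isUnit_one_sub (IsNilpotent.neg ⟨l, by
    ext ⟨i, p⟩ ⟨j, q⟩
    exact Nx_pow_eq_zero A t l l (i, p) (j, q) (by omega)⟩)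

lemma Fx_inv_mulVec (A : ℕ → Matrix (Fin n) (Fin n) ℝ) (t l : ℕ)
    {w b : Fin l × Fin n → ℝ} (h : Fx A t l *ᵥ w = b) : (Fx A t l)⁻¹ *ᵥ b = w := by
  rw [← h, Matrix.mulVec_mulVec, Matrix.nonsing_inv_mul _
    ((Matrix.isUnit_iff_isUnit_det _).mp (Fx_isUnit A t l)), Matrix.one_mulVec]

lemma Nx_mulVec (A : ℕ → Matrix (Fin n) (Fin n) ℝ) (t l : ℕ) (v : Fin l × Fin n → ℝ)
    (i : Fin l) (p : Fin n) :
    (Nx A t l *ᵥ v) (i, p) =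
      if h : (i : ℕ) + 1 < l then -∑ q, A (t + (i : ℕ)) q p * v (⟨(i : ℕ) + 1, h⟩, q) else 0 := by
  simp only [Nx, Matrix.mulVec, dotProduct, Fintype.sum_prod_type]
  split
  · next h =>
    rw [Finset.sum_eq_single (⟨(i : ℕ) + 1, h⟩ : Fin l)]
    · rw [← Finset.sum_neg_distrib]
      apply Finset.sum_congr rfl
      intro q _
      simp
    · intro j _ hj
      have : ¬ ((j : ℕ) = (i : ℕ) + 1) := fun he => hj (Fin.ext he)
      simp [this]
    · intro hmem; exact absurd (Finset.mem_univ _) hmem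
  · next h =>
    apply Finset.sum_eq_zero
    intro j _
    have : ¬ ((j : ℕ) = (i : ℕ) + 1) := by have := j.isLt; omega
    simp [this]

lemma Fx_mulVec (A : ℕ → Matrix (Fin n) (Fin n) ℝ) (t l : ℕ) (v : Fin l × Fin n → ℝ)
    (i : Fin l) (p : Fin n) :
    (Fx A t l *ᵥ v) (i, p) = v (i, p) +
      (if h : (i : ℕ) + 1 < l then -∑ q, A (t + (i : ℕ)) q p * v (⟨(i : ℕ) + 1, h⟩, q) else 0) := by
  rw [Fx_eq, Matrix.add_mulVec, Matrix.one_mulVec, Pi.add_apply, Nx_mulVec]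

lemma Fu_mulVec (B : ℕ → Matrix (Fin n) (Fin m) ℝ) (t l : ℕ) (v : Fin l × Fin n → ℝ)
    (i : Fin l) (p : Fin m) :
    (Fu B t l *ᵥ v) (i, p) = ∑ q, B (t + (i : ℕ)) q p * v (i, q) := by
  simp only [Fu, Matrix.mulVec, dotProduct, Fintype.sum_prod_type,
    Matrix.transpose_apply]
  rw [Finset.sum_eq_single i]
  · simp
  · intro j _ hj; simp [Ne.symm hj]
  · intro hmem; exact absurd (Finset.mem_univ _) hmem

lemma Phix_mulVec (G : ℕ → Matrix (Fin r) (Fin n) ℝ) (t l : ℕ) (ω : Fin r → ℝ)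
    (i : Fin l) (p : Fin n) :
    (Phix G t l *ᵥ ω) (i, p) = ∑ w, G (t + (i : ℕ)) w p * ω w := by
  simp [Phix, Matrix.mulVec, dotProduct]

lemma Phiu_mulVec (D : ℕ → Matrix (Fin r) (Fin m) ℝ) (t l : ℕ) (ω : Fin r → ℝ)
    (i : Fin l) (p : Fin m) :
    (Phiu D t l *ᵥ ω) (i, p) = ∑ w, D (t + (i : ℕ)) w p * ω w := by
  simp [Phiu, Matrix.mulVec, dotProduct]

lemma Vm_mulVec (A : ℕ → Matrix (Fin n) (Fin n) ℝ) (t l : ℕ) (u : Fin n → ℝ)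
    (i : Fin l) (p : Fin n) :
    (Vm A t l *ᵥ u) (i, p) =
      if (i : ℕ) = l - 1 then ∑ q, A (t + l - 1) q p * u q else 0 := by
  simp only [Vm, Matrix.mulVec, dotProduct, Matrix.transpose_apply]
  split <;> simp

lemma KKT_row1 {A : ℕ → Matrix (Fin n) (Fin n) ℝ} {B : ℕ → Matrix (Fin n) (Fin m) ℝ}
    {G : ℕ → Matrix (Fin r) (Fin n) ℝ} {D : ℕ → Matrix (Fin r) (Fin m) ℝ} {T : ℕ}
    {ω : Fin r → ℝ} {lam : ℕ → Fin n → ℝ} (h : KKT A B G D T ω lam)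
    (s : ℕ) (hs1 : 1 ≤ s) (hs2 : s ≤ T) (p : Fin n) :
    lam s p + (if s < T then -∑ q, A s q p * lam (s + 1) q else 0) = ∑ w, G s w p * ω w := by
  have h1 : Fx A 1 T *ᵥ stackVec lam 1 T = Phix G 1 T *ᵥ ω := by
    have := h.1
    rw [neg_add_eq_zero] at this
    exact this
  have h2 := congrFun h1 (⟨s - 1, by omega⟩, p)
  rw [Fx_mulVec, Phix_mulVec] at h2
  simp only [stackVec] at h2
  have e1 : 1 + (s - 1) = s := by omega
  have e2 : s - 1 + 1 = s := by omega
  have e3 : 1 + s = s + 1 := by omega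
  simp only [e2, e1, e3] at h2
  rw [dite_eq_ite] at h2
  exact h2

lemma KKT_row2 {A : ℕ → Matrix (Fin n) (Fin n) ℝ} {B : ℕ → Matrix (Fin n) (Fin m) ℝ}
    {G : ℕ → Matrix (Fin r) (Fin n) ℝ} {D : ℕ → Matrix (Fin r) (Fin m) ℝ} {T : ℕ}
    {ω : Fin r → ℝ} {lam : ℕ → Fin n → ℝ} (h : KKT A B G D T ω lam)
    (s : ℕ) (hs1 : 1 ≤ s) (hs2 : s ≤ T) (p : Fin m) :
    ∑ q, B s q p * lam s q + ∑ w, D s w p * ω w = 0 := by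
  have h2 := congrFun h.2 (⟨s - 1, by omega⟩, p)
  rw [Pi.add_apply, Fu_mulVec, Phiu_mulVec] at h2
  simp only [stackVec] at h2
  have e1 : 1 + (s - 1) = s := by omega
  simp only [e1] at h2
  simpa using h2

lemma window_Fx {A : ℕ → Matrix (Fin n) (Fin n) ℝ} {B : ℕ → Matrix (Fin n) (Fin m) ℝ}
    {G : ℕ → Matrix (Fin r) (Fin n) ℝ} {D : ℕ → Matrix (Fin r) (Fin m) ℝ} {T : ℕ}
    {ω : Fin r → ℝ} {lam : ℕ → Fin n → ℝ} (h : KKT A B G D T ω lam) (hT : 1 ≤ T)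
    {t l : ℕ} (ht : 1 ≤ t) (hl : 1 ≤ l) (htl : t + l - 1 ≤ T) :
    Fx A t l *ᵥ stackVec lam t l =
      Phix G t l *ᵥ ω + Vm A t l *ᵥ (fun q => if t + l ≤ T then lam (t + l) q else 0) := by
  funext ip
  obtain ⟨i, p⟩ := ip
  rw [Fx_mulVec, Pi.add_apply, Phix_mulVec, Vm_mulVec]
  simp only [stackVec]
  have hiT : t + (i : ℕ) ≤ T := by have := i.isLt; omega
  have row := KKT_row1 h (t + (i : ℕ)) (by omega) hiT p
  by_cases hi : (i : ℕ) + 1 < l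
  · rw [dif_pos hi, if_neg (by omega)]
    have hlt : t + (i : ℕ) < T := by omega
    rw [if_pos hlt] at row
    have e3 : t + ((i : ℕ) + 1) = t + (i : ℕ) + 1 := by omega
    simp only [e3]
    rw [add_zero]
    exact row
  · have hi' : (i : ℕ) = l - 1 := by have := i.isLt; omega
    rw [dif_neg hi, if_pos hi']
    have e4 : t + (i : ℕ) = t + l - 1 := by omega
    rw [e4] at row ⊢
    by_cases hTl : t + l ≤ T
    · have hlt : t + l - 1 < T := by omega
      rw [if_pos hlt] at row
      have e5 : t + l - 1 + 1 = t + l := by omega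
      rw [e5] at row
      simp only [if_pos hTl]
      linarith
    · have hlt : ¬ (t + l - 1 < T) := by omega
      rw [if_neg hlt] at row
      simp only [if_neg hTl]
      simpa using row

lemma window_Fu {A : ℕ → Matrix (Fin n) (Fin n) ℝ} {B : ℕ → Matrix (Fin n) (Fin m) ℝ}
    {G : ℕ → Matrix (Fin r) (Fin n) ℝ} {D : ℕ → Matrix (Fin r) (Fin m) ℝ} {T : ℕ}
    {ω : Fin r → ℝ} {lam : ℕ → Fin n → ℝ} (h : KKT A B G D T ω lam)
    {t l : ℕ} (ht : 1 ≤ t) (hl : 1 ≤ l) (htl : t + l - 1 ≤ T) :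
    Fu B t l *ᵥ stackVec lam t l + Phiu D t l *ᵥ ω = 0 := by
  funext ip
  obtain ⟨i, p⟩ := ip
  rw [Pi.add_apply, Fu_mulVec, Phiu_mulVec]
  simp only [stackVec]
  have hiT : t + (i : ℕ) ≤ T := by have := i.isLt; omega
  have row := KKT_row2 h (t + (i : ℕ)) (by omega) hiT p
  simpa using row

lemma Hm_mulVec_star {A : ℕ → Matrix (Fin n) (Fin n) ℝ} {B : ℕ → Matrix (Fin n) (Fin m) ℝ}
    {G : ℕ → Matrix (Fin r) (Fin n) ℝ} {D : ℕ → Matrix (Fin r) (Fin m) ℝ} {T : ℕ}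
    {ω : Fin r → ℝ} {lam : ℕ → Fin n → ℝ} (h : KKT A B G D T ω lam) (hT : 1 ≤ T)
    {t l : ℕ} (ht : 1 ≤ t) (hl : 1 ≤ l) (htl : t + l - 1 ≤ T) :
    Hm A B G D t l *ᵥ
      Sum.elim ω (fun q => if t + l ≤ T then lam (t + l) q else 0) = 0 := by
  set lb : Fin n → ℝ := fun q => if t + l ≤ T then lam (t + l) q else 0 with hlb
  have key : (Fx A t l)⁻¹ *ᵥ (Phix G t l *ᵥ ω + Vm A t l *ᵥ lb) = stackVec lam t l :=
    Fx_inv_mulVec A t l (window_Fx h hT ht hl htl)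
  have : Hm A B G D t l *ᵥ Sum.elim ω lb =
      Fu B t l *ᵥ ((Fx A t l)⁻¹ *ᵥ (Phix G t l *ᵥ ω + Vm A t l *ᵥ lb)) + Phiu D t l *ᵥ ω := by
    rw [Hm, fromCols_mulVec_sumElim, H1m, H2m, Matrix.add_mulVec, Matrix.mulVec_add,
      ← Matrix.mulVec_mulVec, ← Matrix.mulVec_mulVec, ← Matrix.mulVec_mulVec,
      ← Matrix.mulVec_mulVec, Matrix.mulVec_add]
    abel
  rw [this, key, window_Fu h ht hl htl]

/-- Corollary 1 (IOC with incomplete observations): if the full-horizon KKT conditions hold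
for some nonzero `ω*`, and `rank H(t,l) = r+n−1`, then any nonzero kernel element
`(ω̂, λ̂)` of `H(t,l)` has `ω̂ = c·ω*` for some `c ≠ 0`. -/
theorem IOC_incomplete_observations (n m r T : ℕ) (hn : 0 < n) (hm : 0 < m) (hr : 0 < r) (hT : 1 ≤ T)
    (A : ℕ → Matrix (Fin n) (Fin n) ℝ) (B : ℕ → Matrix (Fin n) (Fin m) ℝ)
    (G : ℕ → Matrix (Fin r) (Fin n) ℝ) (D : ℕ → Matrix (Fin r) (Fin m) ℝ)
    (hAT : A T = 1)
    (ωstar : Fin r → ℝ) (hωstar : ωstar ≠ 0)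
    (lamstar : ℕ → Fin n → ℝ) (hKKT : KKT A B G D T ωstar lamstar)
    (t l : ℕ) (ht : 1 ≤ t) (hl : 1 ≤ l) (htl : t + l - 1 ≤ T)
    (ωh : Fin r → ℝ) (lamh : Fin n → ℝ)
    (hker : Hm A B G D t l *ᵥ Sum.elim ωh lamh = 0)
    (hne : Sum.elim ωh lamh ≠ 0)
    (hrank : (Hm A B G D t l).rank = r + n - 1) :
    ∃ c : ℝ, c ≠ 0 ∧ ωh = c • ωstar := by
  set M := Hm A B G D t l with hM
  -- the starred kernel vector
  set vstar : Fin r ⊕ Fin n → ℝ :=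
    Sum.elim ωstar (fun q => if t + l ≤ T then lamstar (t + l) q else 0) with hvstar
  have hvker : M.mulVecLin vstar = 0 := by
    rw [Matrix.mulVecLin_apply]
    exact Hm_mulVec_star hKKT hT ht hl htl
  have hvne : vstar ≠ 0 := by
    intro h0
    apply hωstar
    funext x
    exact congrFun h0 (Sum.inl x)
  -- kernel has dimension 1
  have hdim : Module.finrank ℝ (LinearMap.ker M.mulVecLin) = 1 := by
    have hrn := LinearMap.finrank_range_add_finrank_ker M.mulVecLin
    have hdom : Module.finrank ℝ (Fin r ⊕ Fin n → ℝ) = r + n := by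
      rw [Module.finrank_fintype_fun_eq_card, Fintype.card_sum, Fintype.card_fin,
        Fintype.card_fin]
    have hrange : Module.finrank ℝ (LinearMap.range M.mulVecLin) = r + n - 1 := hrank
    omega
  -- kernel = span of vstar
  have hvmem : vstar ∈ LinearMap.ker M.mulVecLin := hvker
  have hspan : Submodule.span ℝ {vstar} = LinearMap.ker M.mulVecLin := by
    apply Submodule.eq_of_le_of_finrank_le
    · rw [Submodule.span_le, Set.singleton_subset_iff]
      exact hvmem
    · rw [hdim, finrank_span_singleton hvne]
  have hhmem : Sum.elim ωh lamh ∈ LinearMap.ker M.mulVecLin := by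
    rw [LinearMap.mem_ker, Matrix.mulVecLin_apply]
    exact hker
  rw [← hspan, Submodule.mem_span_singleton] at hhmem
  obtain ⟨c, hc⟩ := hhmem
  refine ⟨c, ?_, ?_⟩
  · intro hc0
    apply hne
    rw [← hc, hc0, zero_smul]
  · funext x
    have := congrFun hc (Sum.inl x)
    simpa [hvstar] using this.symm

end
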